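/- Let q = 2 and let z ∈ 𝕋ⁿ be such that H₀(z) conj(H₁(z)) ≠ 0 and 1 − |H₀(z)|² − |H₁(z)|² ≠ 0. If b₀, b₁, b₂ ∈ ℂ satisfy Φ_H(z) · diag(b₀, b₁, b₂) · Φ_H*(z) = I, then b₀ = 2 − |H₀(z)|² − |H₁(z)|² and b₁ = b₂ = 1. -/

import Mathlib

open Matrix Complex

/-- The LP² matrix `Φ_H = [H, I − H H*]` built from the vector of values
`h = H(z)` at a point `z ∈ 𝕋ⁿ` (on the torus `H*(z)` has entries `conj`). -/
noncomputable def PhiV {q : ℕ} (h : Fin q → ℂ) : Matrix (Fin q) (Fin (q + 1)) ℂ :=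
  Matrix.of fun i j =>
    if hj : j = 0 then h i
    else (if i = j.pred hj then (1 : ℂ) else 0) - h i * (starRingEnd ℂ) (h (j.pred hj))

/-- for `q = 2`, at a point `z` with `H₀(z) conj(H₁(z)) ≠ 0` and
`1 − |H₀(z)|² − |H₁(z)|² ≠ 0`, if `Φ_H(z) diag(b₀,b₁,b₂) Φ_H*(z) = I` then
`b₀ = 2 − |H₀(z)|² − |H₁(z)|²` and `b₁ = b₂ = 1`. -/
theorem lp2_scaling_unique_q2 (h : Fin 2 → ℂ)
    (h1 : h 0 * (starRingEnd ℂ) (h 1) ≠ 0)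
    (h2 : (1 : ℝ) - Complex.normSq (h 0) - Complex.normSq (h 1) ≠ 0)
    (b : Fin 3 → ℂ)
    (hb : PhiV h * Matrix.diagonal b * (PhiV h)ᴴ = 1) :
    b 0 = ((2 : ℝ) - Complex.normSq (h 0) - Complex.normSq (h 1) : ℝ) ∧
    b 1 = 1 ∧ b 2 = 1 := by
  have e00 := congr_fun (congr_fun hb 0) 0
  have e11 := congr_fun (congr_fun hb 1) 1
  have e01 := congr_fun (congr_fun hb 0) 1
  simp [PhiV, Matrix.mul_apply, Fin.sum_univ_succ, Matrix.diagonal, Matrix.one_apply,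
    Fin.ext_iff, map_sub, _root_.map_mul, - Fin.val_eq_zero_iff] at e00 e11 e01
  have ha := Complex.mul_conj (h 0)
  have hc := Complex.mul_conj (h 1)
  have key : h 0 * (starRingEnd ℂ) (h 1) *
      (b 0 - b 1 * (1 - h 0 * (starRingEnd ℂ) (h 0)) - b 2 * (1 - h 1 * (starRingEnd ℂ) (h 1))) = 0 := by
    linear_combination e01
  have hP := (mul_eq_zero.mp key).resolve_left h1
  have E1 : b 1 * (1 - h 0 * (starRingEnd ℂ) (h 0)) + b 2 * (h 0 * (starRingEnd ℂ) (h 0)) = 1 := by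
    linear_combination e00 - (h 0 * (starRingEnd ℂ) (h 0)) * hP
  have E2 : b 1 * (h 1 * (starRingEnd ℂ) (h 1)) + b 2 * (1 - h 1 * (starRingEnd ℂ) (h 1)) = 1 := by
    linear_combination e11 - (h 1 * (starRingEnd ℂ) (h 1)) * hP
  have h2c : ((1 - Complex.normSq (h 0) - Complex.normSq (h 1) : ℝ) : ℂ) ≠ 0 :=
    Complex.ofReal_ne_zero.mpr h2
  have key2 : ((1 - Complex.normSq (h 0) - Complex.normSq (h 1) : ℝ) : ℂ) * (b 1 - b 2) = 0 := by
    push_cast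
    linear_combination E1 - E2 + (b 1 - b 2) * ha + (b 1 - b 2) * hc
  have b12 : b 1 - b 2 = 0 := (mul_eq_zero.mp key2).resolve_left h2c
  have hb1 : b 1 = 1 := by
    linear_combination E1 + (h 0 * (starRingEnd ℂ) (h 0)) * b12
  have hb2 : b 2 = 1 := by linear_combination hb1 - b12
  refine ⟨?_, hb1, hb2⟩
  push_cast
  linear_combination hP + (1 - h 0 * (starRingEnd ℂ) (h 0)) * hb1 +
    (1 - h 1 * (starRingEnd ℂ) (h 1)) * hb2 - ha - hc
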